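/- Let R = k[T]/T^p and M a finitely generated R-module. For a nonzero m ∈ M of nilpotency index α > 0, the following are equivalent: (1) the submodule ⟨m⟩ generated by m is a direct summand of M; (2) for all i < α, the depth of T^i m equals i; (3) the depth of T^{α-1} m equals α - 1. -/

import Mathlib

open Polynomial

noncomputable section

/-- `Mmod k i` is the `k[T]`-module `M_i = k[T]/(T^i)`. -/
abbrev Mmod (k : Type) [Field k] (i : ℕ) : Type :=
  Polynomial k ⧸ Ideal.span {(X : Polynomial k) ^ i}

/-- A permutation `kC_p`-module: a direct sum of copies of `kC_p = k[T]/T^p`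
and the trivial module `k = k[T]/T`. -/
def IsPermMod (k : Type) [Field k] (p : ℕ) (M : Type) [AddCommGroup M]
    [Module (Polynomial k) M] : Prop :=
  ∃ r s : ℕ,
    Nonempty (M ≃ₗ[Polynomial k] ((Fin r → Mmod k p) × (Fin s → Mmod k 1)))

/-- `m` has depth `i`: `m ∈ T^i M` but `m ∉ T^{i+1} M`. -/
def HasDepth (k : Type) [Field k] {M : Type} [AddCommGroup M] [Module (Polynomial k) M]
    (i : ℕ) (m : M) : Prop :=
  (∃ y : M, m = (X : Polynomial k) ^ i • y) ∧ ¬ ∃ y : M, m = (X : Polynomial k) ^ (i + 1) • y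

/-- `α` is the nilpotency index of `m` with respect to `T`. -/
def IsIndex (k : Type) [Field k] {M : Type} [AddCommGroup M] [Module (Polynomial k) M]
    (α : ℕ) (m : M) : Prop :=
  (X : Polynomial k) ^ α • m = 0 ∧ ∀ β < α, (X : Polynomial k) ^ β • m ≠ 0

/-- `M` admits a resolution `0 → P_s → ⋯ → P_0 → M → 0` by permutation `kC_p`-modules. -/
def HasPermRes (k : Type) [Field k] (p : ℕ) :
    (s : ℕ) → (M : Type) → [AddCommGroup M] → [Module (Polynomial k) M] → Prop
  | 0, M, _, _ => IsPermMod k p M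
  | (s + 1), M, _, _ =>
      ∃ (P : Type) (_ : AddCommGroup P) (_ : Module (Polynomial k) P)
        (f : P →ₗ[Polynomial k] M), IsPermMod k p P ∧ Function.Surjective f ∧
          HasPermRes k p s (LinearMap.ker f)

/-- The `p`-permutation dimension of `M`: minimal length of a permutation resolution. -/
def ppdim (k : Type) [Field k] (p : ℕ) (M : Type) [AddCommGroup M]
    [Module (Polynomial k) M] : ℕ :=
  sInf {s | HasPermRes k p s M}

/-- The `p`-distance function: `f 1 = f p = 0` and
`f x = min (f (p-x)) (f (p-x+1)) + 1` for `2 ≤ x ≤ p-1`. -/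
def IsSizeFun (p : ℕ) (f : ℕ → ℕ) : Prop :=
  f 1 = 0 ∧ f p = 0 ∧ ∀ x, 2 ≤ x → x ≤ p - 1 → f x = min (f (p - x)) (f (p - x + 1)) + 1

/-- Key construction: given an additive functional `ℓ : M → k` that kills `X^α • M`,
is suitably `C`-semilinear, and takes value `1` on `X^(α-1) • m`, the cyclic submodule
generated by `m` is a direct summand. -/
theorem aux_retract (k : Type) [Field k] (M : Type) [AddCommGroup M]
    [Module (Polynomial k) M]
    (m : M) (α : ℕ) (hα : 0 < α) (hXα : (X : Polynomial k) ^ α • m = 0)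
    (ℓ : M →+ k) (hℓW : ∀ y : M, ℓ ((X : Polynomial k) ^ α • y) = 0)
    (hℓC : ∀ (c : k) (x : M), ℓ ((C c : Polynomial k) • x) = c * ℓ x)
    (hℓt : ℓ ((X : Polynomial k) ^ (α - 1) • m) = 1) :
    ∃ N : Submodule (Polynomial k) M,
      IsCompl (Submodule.span (Polynomial k) {m}) N := by
  set α' := α - 1 with hα'
  have hα'1 : α' + 1 = α := Nat.sub_add_cancel hα
  set φ : M → Polynomial k :=
    fun x => ∑ i ∈ Finset.range α, C (ℓ ((X : Polynomial k) ^ (α' - i) • x)) * X ^ i with hφ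
  have hφadd : ∀ x y, φ (x + y) = φ x + φ y := by
    intro x y
    rw [hφ, ← Finset.sum_add_distrib]
    apply Finset.sum_congr rfl
    intro i _
    rw [smul_add, map_add, C_add, add_mul]
  have hφX : ∀ x : M, φ ((X : Polynomial k) • x) = X * φ x - C (ℓ x) * X ^ α := by
    intro x
    have hXφ : X * φ x =
        (∑ i ∈ Finset.range α', C (ℓ ((X : Polynomial k) ^ (α' - i) • x)) * X ^ (i + 1))
          + C (ℓ x) * X ^ α := by
      rw [hφ, Finset.mul_sum]
      have h1 : ∀ i ∈ Finset.range α,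
          X * (C (ℓ ((X : Polynomial k) ^ (α' - i) • x)) * X ^ i)
            = C (ℓ ((X : Polynomial k) ^ (α' - i) • x)) * X ^ (i + 1) := by
        intro i _; ring
      rw [Finset.sum_congr rfl h1, ← hα'1, Finset.sum_range_succ]
      simp [pow_zero, one_smul]
    calc φ ((X : Polynomial k) • x)
        = ∑ i ∈ Finset.range α, C (ℓ ((X : Polynomial k) ^ (α - i) • x)) * X ^ i := by
          rw [hφ]
          apply Finset.sum_congr rfl
          intro i hi
          rw [Finset.mem_range] at hi
          rw [← mul_smul, ← pow_succ]
          have h2 : α' - i + 1 = α - i := by omega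
          rw [h2]
      _ = (∑ i ∈ Finset.range α', C (ℓ ((X : Polynomial k) ^ (α - (i + 1)) • x)) * X ^ (i + 1))
            + C (ℓ ((X : Polynomial k) ^ (α - 0) • x)) * X ^ 0 := by
          rw [← hα'1]; exact Finset.sum_range_succ' _ α'
      _ = ∑ i ∈ Finset.range α', C (ℓ ((X : Polynomial k) ^ (α' - i) • x)) * X ^ (i + 1) := by
          have h0 : α - 0 = α := rfl
          have h2 : ∀ i : ℕ, α - (i + 1) = α' - i := by omega
          simp [h0, h2, hℓW]
      _ = X * φ x - C (ℓ x) * X ^ α := by rw [hXφ]; ring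
  -- the unit u = φ m and its inverse
  set u : Polynomial k := φ m with hu
  have hdvd : (X : Polynomial k) ∣ (u - 1) := by
    have hu1 : u = ∑ i ∈ Finset.range α, C (ℓ ((X : Polynomial k) ^ (α' - i) • m)) * X ^ i :=
      rfl
    have : u = (∑ i ∈ Finset.range α',
        C (ℓ ((X : Polynomial k) ^ (α' - (i + 1)) • m)) * X ^ (i + 1)) + 1 := by
      rw [hu1, ← hα'1, Finset.sum_range_succ' _ α']
      simp [hℓt]
    rw [this, add_sub_cancel_right]
    apply Finset.dvd_sum
    intro i _
    exact Dvd.dvd.mul_left (dvd_pow_self X (Nat.succ_ne_zero i)) _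
  set v : Polynomial k := ∑ i ∈ Finset.range α, (-(u - 1)) ^ i with hv
  have huv : u * v = 1 - (-(u - 1)) ^ α := by
    have h := geom_sum_mul (-(u - 1)) α
    rw [← hv] at h
    linear_combination -h
  have hwα : ((-(u - 1)) ^ α) • m = 0 := by
    obtain ⟨w', hw'⟩ := hdvd
    have : (-(u - 1)) ^ α = (-w') ^ α * X ^ α := by rw [hw']; ring
    rw [this, mul_smul, hXα, smul_zero]
  set m₀ : M := v • m with hm₀
  have hum₀ : u • m₀ = m := by
    rw [hm₀, ← mul_smul, huv, sub_smul, one_smul, hwα, sub_zero]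
  set ρ : M → M := fun x => φ x • m₀ with hρ
  have hρm : ρ m = m := hum₀
  have hρadd : ∀ x y, ρ (x + y) = ρ x + ρ y := by
    intro x y; rw [hρ]; simp only []; rw [hφadd, add_smul]
  have hXαm₀ : (X : Polynomial k) ^ α • m₀ = 0 := by
    rw [hm₀, ← mul_smul, mul_comm, mul_smul, hXα, smul_zero]
  have hρX : ∀ x, ρ ((X : Polynomial k) • x) = (X : Polynomial k) • ρ x := by
    intro x
    show φ ((X : Polynomial k) • x) • m₀ = (X : Polynomial k) • (φ x • m₀)
    rw [hφX, sub_smul, mul_smul, mul_smul, hXαm₀, smul_zero, sub_zero]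
  have hρXn : ∀ (n : ℕ) (x : M), ρ ((X : Polynomial k) ^ n • x) = (X : Polynomial k) ^ n • ρ x := by
    intro n
    induction n with
    | zero => intro x; simp
    | succ n ih =>
      intro x
      rw [pow_succ, mul_smul, ih, hρX, ← mul_smul, ← mul_smul, mul_comm]
  have hφC : ∀ (a : k) (x : M), φ ((C a : Polynomial k) • x) = C a * φ x := by
    intro a x
    rw [hφ, Finset.mul_sum]
    apply Finset.sum_congr rfl
    intro i _
    have h1 : (X : Polynomial k) ^ (α' - i) • ((C a : Polynomial k) • x)
        = (C a : Polynomial k) • ((X : Polynomial k) ^ (α' - i) • x) := by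
      rw [← mul_smul, ← mul_smul, mul_comm]
    rw [h1, hℓC, map_mul, mul_assoc]
  have hρC : ∀ (a : k) (x : M), ρ ((C a : Polynomial k) • x) = (C a : Polynomial k) • ρ x := by
    intro a x
    show φ ((C a : Polynomial k) • x) • m₀ = (C a : Polynomial k) • (φ x • m₀)
    rw [hφC, mul_smul]
  have hρsmul : ∀ (f : Polynomial k) (x : M), ρ (f • x) = f • ρ x := by
    intro f
    induction f using Polynomial.induction_on' with
    | add a b ha hb => intro x; rw [add_smul, hρadd, ha, hb, add_smul]
    | monomial n a =>
      intro x
      rw [← C_mul_X_pow_eq_monomial, mul_smul, hρC, hρXn, ← mul_smul]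
  set ρL : M →ₗ[Polynomial k] M :=
    { toFun := ρ, map_add' := hρadd, map_smul' := hρsmul } with hρL
  have hρLapp : ∀ x, ρL x = ρ x := fun _ => rfl
  have hρrange : ∀ x, ρ x ∈ Submodule.span (Polynomial k) {m} := by
    intro x
    show φ x • m₀ ∈ _
    rw [hm₀, ← mul_smul]
    exact Submodule.smul_mem _ _ (Submodule.mem_span_singleton_self m)
  refine ⟨LinearMap.ker ρL, ?_, ?_⟩
  · rw [Submodule.disjoint_def]
    intro x hx hker
    rcases Submodule.mem_span_singleton.1 hx with ⟨f, rfl⟩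
    rw [LinearMap.mem_ker, hρLapp, hρsmul, hρm] at hker
    exact hker
  · rw [codisjoint_iff, eq_top_iff]
    intro x _
    rw [Submodule.mem_sup]
    refine ⟨ρ x, hρrange x, x - ρ x, ?_, by abel⟩
    rw [LinearMap.mem_ker, map_sub, hρLapp, hρLapp]
    have hρx : ρ x = (φ x * v) • m := by
      show φ x • m₀ = _
      rw [hm₀, mul_smul]
    have : ρ (ρ x) = ρ x := by
      rw [hρx, hρsmul, hρm, ← hρx]
    rw [this, sub_self]

/-- Over `R = k[T]/T^p`, for a nonzero `m` of nilpotency index `α > 0` in a finitely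
generated module `M`, TFAE: `⟨m⟩` is a direct summand of `M`; `dep (T^i m) = i` for all
`i < α`; `dep (T^{α-1} m) = α - 1`. -/
theorem stmt4 (k : Type) [Field k] (p : ℕ) (hp : p.Prime) [CharP k p]
    (M : Type) [AddCommGroup M] [Module (Polynomial k) M] [Module.Finite (Polynomial k) M]
    (hann : ∀ m : M, (X : Polynomial k) ^ p • m = 0)
    (m : M) (hm : m ≠ 0) (α : ℕ) (hα : 0 < α) (hidx : IsIndex k α m) :
    List.TFAE
      [∃ N : Submodule (Polynomial k) M, IsCompl (Submodule.span (Polynomial k) {m}) N,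
       ∀ i < α, HasDepth k i ((X : Polynomial k) ^ i • m),
       HasDepth k (α - 1) ((X : Polynomial k) ^ (α - 1) • m)] := by
  obtain ⟨hidx1, hidx2⟩ := hidx
  tfae_have 1 → 2 := by
    rintro ⟨N, hN⟩ i hi
    refine ⟨⟨m, rfl⟩, ?_⟩
    rintro ⟨y, hy⟩
    have hy' : y ∈ Submodule.span (Polynomial k) {m} ⊔ N := by
      rw [hN.sup_eq_top]; trivial
    rcases Submodule.mem_sup.1 hy' with ⟨h, hh, n, hn, rfl⟩
    rcases Submodule.mem_span_singleton.1 hh with ⟨f, rfl⟩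
    have h1 : (X : Polynomial k) ^ i • m - (X : Polynomial k) ^ (i + 1) • (f • m)
        = (X : Polynomial k) ^ (i + 1) • n := by
      rw [hy, smul_add]; abel
    have hmem1 : (X : Polynomial k) ^ i • m - (X : Polynomial k) ^ (i + 1) • (f • m)
        ∈ Submodule.span (Polynomial k) {m} := by
      have hms := Submodule.mem_span_singleton_self (R := Polynomial k) m
      exact sub_mem (Submodule.smul_mem _ _ hms)
        (Submodule.smul_mem _ _ (Submodule.smul_mem _ _ hms))
    have hmem2 : (X : Polynomial k) ^ i • m - (X : Polynomial k) ^ (i + 1) • (f • m) ∈ N := by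
      rw [h1]; exact Submodule.smul_mem _ _ hn
    have h0 : (X : Polynomial k) ^ i • m = (X : Polynomial k) ^ (i + 1) • (f • m) :=
      sub_eq_zero.1 (Submodule.disjoint_def.1 hN.disjoint _ hmem1 hmem2)
    have haux : ((X : Polynomial k) * f) • ((X : Polynomial k) ^ i • m)
        = (X : Polynomial k) ^ (i + 1) • (f • m) := by
      rw [← mul_smul, ← mul_smul]
      congr 1
      ring
    have hstep : (X : Polynomial k) ^ i • m
        = ((X : Polynomial k) * f) • ((X : Polynomial k) ^ i • m) := h0.trans haux.symm
    have hiter : ∀ j : ℕ, (X : Polynomial k) ^ i • m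
        = (((X : Polynomial k) * f) ^ j) • ((X : Polynomial k) ^ i • m) := by
      intro j
      induction j with
      | zero => rw [pow_zero, one_smul]
      | succ j ih =>
        calc (X : Polynomial k) ^ i • m
            = ((X : Polynomial k) * f) ^ j • ((X : Polynomial k) ^ i • m) := ih
          _ = ((X : Polynomial k) * f) ^ j
                • (((X : Polynomial k) * f) • ((X : Polynomial k) ^ i • m)) := by
              rw [← hstep]
          _ = ((X : Polynomial k) * f) ^ (j + 1) • ((X : Polynomial k) ^ i • m) := by
              rw [← mul_smul, ← pow_succ]
    have hzero : (X : Polynomial k) ^ i • m = 0 := by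
      have h2 := hiter p
      rw [mul_pow, mul_comm, mul_smul, hann] at h2
      rw [h2, smul_zero]
    exact hidx2 i hi hzero
  tfae_have 2 → 3 := fun h => h (α - 1) (Nat.sub_lt hα Nat.one_pos)
  tfae_have 3 → 1 := by
    intro h3
    letI instkM : Module k M := Module.compHom M (C : k →+* Polynomial k)
    have hks : ∀ (c : k) (x : M), c • x = (C c : Polynomial k) • x := fun _ _ => rfl
    have hα1 : (α - 1) + 1 = α := Nat.sub_add_cancel hα
    set W : Submodule k M :=
      { carrier := {x | ∃ y : M, x = (X : Polynomial k) ^ α • y}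
        add_mem' := by
          rintro a b ⟨y, rfl⟩ ⟨z, rfl⟩
          exact ⟨y + z, (smul_add _ _ _).symm⟩
        zero_mem' := ⟨0, (smul_zero _).symm⟩
        smul_mem' := by
          rintro c x ⟨y, rfl⟩
          refine ⟨(C c : Polynomial k) • y, ?_⟩
          rw [hks, ← mul_smul, ← mul_smul, mul_comm] } with hW
    have htW : (X : Polynomial k) ^ (α - 1) • m ∉ W := by
      rintro ⟨y, hy⟩
      exact h3.2 ⟨y, by rwa [hα1]⟩
    have hv : W.mkQ ((X : Polynomial k) ^ (α - 1) • m) ≠ 0 := fun h0 =>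
      htW ((Submodule.Quotient.mk_eq_zero W).1 h0)
    obtain ⟨g, hg⟩ := LinearMap.exists_leftInverse_of_injective
      (LinearMap.toSpanSingleton k _ (W.mkQ ((X : Polynomial k) ^ (α - 1) • m)))
      (LinearMap.ker_toSpanSingleton k hv)
    set L : M →ₗ[k] k := g.comp W.mkQ with hL
    have hLW : ∀ y : M, L ((X : Polynomial k) ^ α • y) = 0 := by
      intro y
      have h0 : W.mkQ ((X : Polynomial k) ^ α • y) = 0 :=
        (Submodule.Quotient.mk_eq_zero W).2 ⟨y, rfl⟩
      rw [hL, LinearMap.comp_apply, h0, map_zero]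
    have hLC : ∀ (c : k) (x : M), L ((C c : Polynomial k) • x) = c * L x := by
      intro c x
      rw [← hks, map_smul, smul_eq_mul]
    have hLt : L ((X : Polynomial k) ^ (α - 1) • m) = 1 := by
      have h1 := LinearMap.congr_fun hg 1
      rw [LinearMap.comp_apply, LinearMap.toSpanSingleton_apply_one, LinearMap.id_apply] at h1
      rw [hL, LinearMap.comp_apply]
      exact h1
    exact aux_retract k M m α hα hidx1 L.toAddMonoidHom hLW hLC hLt
  tfae_finish
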